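/- Let P be a forcing notion and κ an infinite cardinal. If cf(κ) ≥ ℵ*(P) (the Lindenbaum number of the set of conditions of P), or if P is κ⁺-distributive, then P is κ-descending distributive. -/

import Mathlib

universe u

/-- A subset `D` of a forcing notion is *open dense* if it is downward closed and
for every condition `p` there is `q ∈ D` with `q ≤ p`. -/
def IsOpenDense {P : Type*} [Preorder P] (D : Set P) : Prop :=
  (∀ p ∈ D, ∀ q, q ≤ p → q ∈ D) ∧ ∀ p : P, ∃ q ∈ D, q ≤ p

/-- A forcing notion `P` is `κ`-descending distributive if for every decreasing sequence
`(D_α)_{α<κ}` of open dense subsets, the intersection `⋂_{α<κ} D_α` is open dense. -/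
def DescDist (P : Type*) [Preorder P] (κ : Cardinal) : Prop :=
  ∀ D : Ordinal → Set P,
    (∀ α, α < κ.ord → IsOpenDense (D α)) →
    (∀ α β : Ordinal, α ≤ β → β < κ.ord → D β ⊆ D α) →
    IsOpenDense (⋂ α ∈ Set.Iio κ.ord, D α)

/-- A forcing notion `P` is `λ`-distributive if for every ordinal `γ < λ` and every family
`(D_α)_{α<γ}` of open dense subsets of `P`, the intersection is open dense. -/
def Distributive (P : Type*) [Preorder P] (lam : Cardinal) : Prop :=
  ∀ γ : Ordinal, γ < lam.ord → ∀ D : Ordinal → Set P,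
    (∀ α, α < γ → IsOpenDense (D α)) →
    IsOpenDense (⋂ α ∈ Set.Iio γ, D α)

/-- The Lindenbaum number `ℵ*(X)`: the least ordinal `α` such that `|α| ≤* |X|` fails,
i.e. such that `α ≠ 0` and there is no surjection from `X` onto `α`. -/
noncomputable def lindenbaumOrd (X : Type u) : Ordinal.{u} :=
  sInf {α : Ordinal.{u} | ¬ (α = 0 ∨ ∃ f : X → α.ToType, Function.Surjective f)}

open Cardinal in
lemma mk_lt_lindenbaum_card (X : Type u) [Nonempty X] : (Cardinal.mk X) < (lindenbaumOrd X).card := by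
  have hne : {α : Ordinal.{u} |
      ¬ (α = 0 ∨ ∃ f : X → α.ToType, Function.Surjective f)}.Nonempty := by
    refine ⟨(Order.succ (Cardinal.mk X)).ord, ?_⟩
    rintro (h0 | ⟨f, hf⟩)
    · have : Order.succ (Cardinal.mk X) = 0 := Cardinal.ord_eq_zero.mp h0
      exact ((Cardinal.zero_le (Cardinal.mk X)).trans_lt (Order.lt_succ _)).ne' this
    · have := Cardinal.mk_le_of_surjective hf
      rw [Cardinal.mk_toType, Cardinal.card_ord] at this
      exact (Order.lt_succ (Cardinal.mk X)).not_ge this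
  have hmem : ¬ (lindenbaumOrd X = 0 ∨
      ∃ f : X → (lindenbaumOrd X).ToType, Function.Surjective f) := csInf_mem hne
  have h0 : lindenbaumOrd X ≠ 0 := fun e => hmem (Or.inl e)
  have hns : ∀ f : X → (lindenbaumOrd X).ToType, ¬ Function.Surjective f :=
    fun f hf => hmem (Or.inr ⟨f, hf⟩)
  by_contra hle
  push_neg at hle
  have hT : Nonempty (lindenbaumOrd X).ToType :=
    Ordinal.toType_nonempty_iff_ne_zero.mpr h0
  have hle' : Cardinal.mk (lindenbaumOrd X).ToType ≤ Cardinal.mk X := by rwa [Cardinal.mk_toType]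
  obtain ⟨e⟩ := (Cardinal.le_def _ _).mp hle'
  exact hns _ (Function.invFun_surjective e.injective)

/-- If `cf(κ) ≥ ℵ*(P)` or `P` is `κ⁺`-distributive, then `P` is `κ`-descending
distributive. -/
theorem statement2 {P : Type u} [PartialOrder P] [OrderTop P] (κ : Cardinal.{u})
    (hκ : Cardinal.aleph0 ≤ κ)
    (h : (lindenbaumOrd P).card ≤ κ.ord.cof ∨ Distributive P (Order.succ κ)) :
    DescDist P κ := by
  intro D hD hmono
  rcases h with h | h
  · constructor
    · intro q hq r hr
      rw [Set.mem_iInter₂] at hq ⊢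
      exact fun α hα => (hD α hα).1 q (hq α hα) r hr
    · intro p
      by_contra hcon
      push_neg at hcon
      have key : ∀ q : P, q ≤ p → ∃ α, α < κ.ord ∧ q ∉ D α := by
        intro q hqp
        by_contra hq
        push_neg at hq
        exact hcon q (Set.mem_iInter₂.mpr fun α hα => hq α hα) hqp
      choose f hf1 hf2 using key
      set g : {q : P // q ≤ p} → Ordinal := fun q => f q.1 q.2 with hg
      have hlsub : Ordinal.lsub g = κ.ord := by
        apply le_antisymm
        · exact Ordinal.lsub_le fun q => hf1 q.1 q.2
        · refine le_of_forall_lt fun α hα => ?_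
          obtain ⟨q, hqD, hqp⟩ := (hD α hα).2 p
          have hαg : α < g ⟨q, hqp⟩ := by
            by_contra hle
            push_neg at hle
            exact hf2 q hqp (hmono _ α hle hα hqD)
          exact hαg.trans (Ordinal.lt_lsub g ⟨q, hqp⟩)
      have h1 : κ.ord.cof ≤ Cardinal.mk {q : P // q ≤ p} := by
        rw [← hlsub]; exact Ordinal.cof_lsub_le g
      have h2 : Cardinal.mk {q : P // q ≤ p} ≤ Cardinal.mk P := Cardinal.mk_subtype_le _
      have h3 : (Cardinal.mk P) < (lindenbaumOrd P).card := mk_lt_lindenbaum_card P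
      exact absurd ((h1.trans h2).trans_lt (h3.trans_le h)) (lt_irrefl _)
  · have hκκ : κ.ord < (Order.succ κ).ord := Cardinal.ord_lt_ord.mpr (Order.lt_succ κ)
    exact h κ.ord hκκ D hD
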